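/- Let A be a product of order unit spaces A_i for i in an index set I, with componentwise order. Then for a = (a_i), b = (b_i) in the interior of the cone of A, Thompson's metric satisfies d_T(a,b) = sup_{i∈I} d_T^i(a_i, b_i), where d_T^i denotes Thompson's metric on the interior of the cone of A_i. -/

import Mathlib

noncomputable section

variable {A : Type*} [AddCommGroup A] [PartialOrder A] [IsOrderedAddMonoid A] [Module ℝ A]
    [PosSMulStrictMono ℝ A]

/-- `u` is an order unit. -/
def IsOrderUnit {B : Type*} [AddCommGroup B] [PartialOrder B] [IsOrderedAddMonoid B] [Module ℝ B] (u : B) : Prop :=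
  ∀ a : B, ∃ l : ℝ, 0 < l ∧ -(l • u) ≤ a ∧ a ≤ l • u

/-- The order unit (semi)norm. -/
def nu {B : Type*} [AddCommGroup B] [PartialOrder B] [IsOrderedAddMonoid B] [Module ℝ B] (u a : B) : ℝ :=
  sInf {l : ℝ | 0 < l ∧ -(l • u) ≤ a ∧ a ≤ l • u}

/-- The Archimedean property with respect to the order unit `u`. -/
def IsArchimedeanOU {B : Type*} [AddCommGroup B] [PartialOrder B] [IsOrderedAddMonoid B] [Module ℝ B] (u : B) : Prop :=
  ∀ a : B, (∀ n : ℕ, (n : ℝ) • a ≤ u) → a ≤ 0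

/-- `M(a/b)`. -/
def Mrel {B : Type*} [AddCommGroup B] [PartialOrder B] [IsOrderedAddMonoid B] [Module ℝ B] (a b : B) : ℝ :=
  sInf {l : ℝ | 0 < l ∧ a ≤ l • b}

/-- Thompson's metric. -/
def dT {B : Type*} [AddCommGroup B] [PartialOrder B] [IsOrderedAddMonoid B] [Module ℝ B] (a b : B) : ℝ :=
  Real.log (max (Mrel a b) (Mrel b a))

/-- Hilbert's metric. -/
def dH {B : Type*} [AddCommGroup B] [PartialOrder B] [IsOrderedAddMonoid B] [Module ℝ B] (a b : B) : ℝ :=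
  Real.log (Mrel a b * Mrel b a)

lemma smul_le_smul_right' {B : Type*} [AddCommGroup B] [PartialOrder B] [IsOrderedAddMonoid B] [Module ℝ B] [PosSMulStrictMono ℝ B]
    {l l' : ℝ} (h : l ≤ l') {x : B} (hx : 0 ≤ x) : l • x ≤ l' • x := by
  have h0 : 0 ≤ (l' - l) • x := smul_nonneg (by linarith) hx
  rw [sub_smul, sub_nonneg] at h0
  exact h0

lemma Mrel_nonneg {B : Type*} [AddCommGroup B] [PartialOrder B] [IsOrderedAddMonoid B] [Module ℝ B] (a b : B) :
    0 ≤ Mrel a b :=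
  Real.sInf_nonneg (fun _ hl => hl.1.le)

lemma Mrel_le {B : Type*} [AddCommGroup B] [PartialOrder B] [IsOrderedAddMonoid B] [Module ℝ B] {a b : B} {l : ℝ}
    (hl : 0 < l) (h : a ≤ l • b) : Mrel a b ≤ l :=
  csInf_le ⟨0, fun _ hx => hx.1.le⟩ ⟨hl, h⟩

lemma le_of_Mrel_lt {B : Type*} [AddCommGroup B] [PartialOrder B] [IsOrderedAddMonoid B] [Module ℝ B] [PosSMulStrictMono ℝ B]
    {a b : B} (hb : 0 ≤ b) (hne : {l : ℝ | 0 < l ∧ a ≤ l • b}.Nonempty)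
    {l : ℝ} (h : Mrel a b < l) : a ≤ l • b := by
  obtain ⟨μ, hμ, hμl⟩ := exists_lt_of_csInf_lt hne h
  exact hμ.2.trans (smul_le_smul_right' hμl.le hb)

lemma Mrel_zero_zero {B : Type*} [AddCommGroup B] [PartialOrder B] [IsOrderedAddMonoid B] [Module ℝ B] :
    Mrel (0 : B) 0 = 0 := by
  refine le_antisymm ?_ (Mrel_nonneg _ _)
  apply le_of_forall_pos_le_add
  intro ε hε
  have := Mrel_le (a := (0 : B)) (b := (0 : B)) hε (by simp)
  linarith

lemma isOrderUnit_apply {I : Type*} [DecidableEq I] {A : I → Type*}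
    [∀ i, AddCommGroup (A i)]
    [∀ i, PartialOrder (A i)] [∀ i, IsOrderedAddMonoid (A i)] [∀ i, Module ℝ (A i)]
    {b : ∀ i, A i} (hb : IsOrderUnit b) (i : I) : IsOrderUnit (b i) := by
  intro x
  obtain ⟨l, hl, h1, h2⟩ := hb (Pi.single i x)
  refine ⟨l, hl, ?_, ?_⟩
  · have := h1 i; simpa using this
  · have := h2 i; simpa using this

lemma Mrel_pi {I : Type*} [Nonempty I] {A : I → Type*} [∀ i, AddCommGroup (A i)]
    [∀ i, PartialOrder (A i)] [∀ i, IsOrderedAddMonoid (A i)]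
    [∀ i, Module ℝ (A i)] [∀ i, PosSMulStrictMono ℝ (A i)]
    (a b : ∀ i, A i) (hb : 0 ≤ b) {L : ℝ} (hL : 0 < L) (hab : a ≤ L • b) :
    Mrel a b = ⨆ i, Mrel (a i) (b i) := by
  have habi : ∀ i, a i ≤ L • b i := fun i => by simpa using hab i
  have hne : ∀ i, {l : ℝ | 0 < l ∧ a i ≤ l • b i}.Nonempty := fun i => ⟨L, hL, habi i⟩
  have hub : ∀ i, Mrel (a i) (b i) ≤ L := fun i => Mrel_le hL (habi i)
  have hbdd : BddAbove (Set.range fun i => Mrel (a i) (b i)) :=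
    ⟨L, by rintro _ ⟨i, rfl⟩; exact hub i⟩
  have h0 : 0 ≤ ⨆ i, Mrel (a i) (b i) :=
    le_ciSup_of_le hbdd (Classical.arbitrary I) (Mrel_nonneg _ _)
  apply le_antisymm
  · apply le_of_forall_pos_le_add
    intro ε hε
    apply csInf_le ⟨0, fun _ hx => hx.1.le⟩
    refine ⟨by linarith, ?_⟩
    intro i
    have h1 : Mrel (a i) (b i) < (⨆ j, Mrel (a j) (b j)) + ε :=
      lt_of_le_of_lt (le_ciSup hbdd i) (by linarith)
    have := le_of_Mrel_lt (hb i) (hne i) h1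
    simpa using this
  · refine ciSup_le fun i => le_csInf ⟨L, hL, hab⟩ ?_
    rintro l ⟨hl, hal⟩
    exact Mrel_le hl (by simpa using hal i)

lemma log_ciSup_dich {I : Type*} [Nonempty I] (z : I → ℝ) (hbdd : BddAbove (Set.range z))
    (hdich : ∀ i, z i = 0 ∨ 1 ≤ z i) :
    Real.log (⨆ i, z i) = ⨆ i, Real.log (z i) := by
  by_cases hall : ∀ i, z i = 0
  · have hz : z = fun _ => 0 := funext hall
    rw [hz]
    simp [ciSup_const]
  · push_neg at hall
    obtain ⟨i0, hi0⟩ := hall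
    have h1 : 1 ≤ z i0 := (hdich i0).resolve_left hi0
    have hs1 : 1 ≤ ⨆ i, z i := le_trans h1 (le_ciSup hbdd i0)
    have hs0 : 0 < ⨆ i, z i := lt_of_lt_of_le one_pos hs1
    have hbddlog : BddAbove (Set.range fun i => Real.log (z i)) := by
      refine ⟨Real.log (⨆ i, z i), ?_⟩
      rintro _ ⟨i, rfl⟩
      show Real.log (z i) ≤ _
      rcases hdich i with h | h
      · rw [h, Real.log_zero]; exact Real.log_nonneg hs1
      · exact Real.log_le_log (lt_of_lt_of_le one_pos h) (le_ciSup hbdd i)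
    apply le_antisymm
    · have hle : (⨆ i, z i) ≤ Real.exp (⨆ i, Real.log (z i)) := by
        apply ciSup_le
        intro i
        rcases hdich i with h | h
        · rw [h]; exact (Real.exp_pos _).le
        · calc z i = Real.exp (Real.log (z i)) :=
                (Real.exp_log (lt_of_lt_of_le one_pos h)).symm
            _ ≤ _ := Real.exp_le_exp.2 (le_ciSup hbddlog i)
      calc Real.log (⨆ i, z i) ≤ Real.log (Real.exp (⨆ i, Real.log (z i))) :=
            Real.log_le_log hs0 hle
        _ = _ := Real.log_exp _
    · apply ciSup_le
      intro i
      rcases hdich i with h | h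
      · rw [h, Real.log_zero]; exact Real.log_nonneg hs1
      · exact Real.log_le_log (lt_of_lt_of_le one_pos h) (le_ciSup hbdd i)

/-- Thompson's metric on a product of order unit spaces is the supremum of the
componentwise Thompson's metrics. -/
theorem stmt6 {I : Type*} [Nonempty I] {A : I → Type*} [∀ i, AddCommGroup (A i)]
    [∀ i, PartialOrder (A i)] [∀ i, IsOrderedAddMonoid (A i)]
    [∀ i, Module ℝ (A i)] [∀ i, PosSMulStrictMono ℝ (A i)]
    (u : ∀ i, A i) (hu0 : ∀ i, 0 ≤ u i) (hu : ∀ i, IsOrderUnit (u i))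
    (harch : ∀ i, IsArchimedeanOU (u i))
    (a b : ∀ i, A i) (ha0 : 0 ≤ a) (hb0 : 0 ≤ b)
    (ha : IsOrderUnit a) (hb : IsOrderUnit b) :
    dT a b = ⨆ i, dT (a i) (b i) := by
  classical
  obtain ⟨L, hL, -, hab⟩ := hb a
  obtain ⟨K, hK, -, hba⟩ := ha b
  have habi : ∀ i, a i ≤ L • b i := fun i => by simpa using hab i
  have hbai : ∀ i, b i ≤ K • a i := fun i => by simpa using hba i
  set Mi := fun i => Mrel (a i) (b i) with hMi
  set Ni := fun i => Mrel (b i) (a i) with hNi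
  set z := fun i => max (Mi i) (Ni i) with hzdef
  have hMiL : ∀ i, Mi i ≤ L := fun i => Mrel_le hL (habi i)
  have hNiK : ∀ i, Ni i ≤ K := fun i => Mrel_le hK (hbai i)
  have hbddM : BddAbove (Set.range Mi) := ⟨L, by rintro _ ⟨i, rfl⟩; exact hMiL i⟩
  have hbddN : BddAbove (Set.range Ni) := ⟨K, by rintro _ ⟨i, rfl⟩; exact hNiK i⟩
  have hbddz : BddAbove (Set.range z) :=
    ⟨max L K, by rintro _ ⟨i, rfl⟩; exact max_le_max (hMiL i) (hNiK i)⟩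
  have hMab : Mrel a b = ⨆ i, Mi i := Mrel_pi a b hb0 hL hab
  have hMba : Mrel b a = ⨆ i, Ni i := Mrel_pi b a ha0 hK hba
  have hmax : max (⨆ i, Mi i) (⨆ i, Ni i) = ⨆ i, z i := by
    apply le_antisymm
    · exact max_le (ciSup_mono hbddz fun i => le_max_left _ _)
        (ciSup_mono hbddz fun i => le_max_right _ _)
    · exact ciSup_le fun i => max_le_max (le_ciSup hbddM i) (le_ciSup hbddN i)
  have hdich : ∀ i, z i = 0 ∨ 1 ≤ z i := by
    intro i
    by_cases hai : a i = 0
    · left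
      have htriv : ∀ x : A i, x = 0 := by
        intro x
        obtain ⟨l, hl, h1, h2⟩ := isOrderUnit_apply ha i x
        rw [hai, smul_zero] at h1 h2
        rw [neg_zero] at h1
        exact le_antisymm h2 h1
      have hbi : b i = 0 := htriv _
      simp only [hzdef, hMi, hNi, hai, hbi, Mrel_zero_zero, max_self]
    · right
      by_contra hlt
      push_neg at hlt
      set t : ℝ := (z i + 1) / 2 with ht
      have hz0 : 0 ≤ z i := le_max_of_le_left (Mrel_nonneg _ _)
      have ht0 : 0 < t := by rw [ht]; linarith
      have ht1 : t < 1 := by rw [ht]; linarith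
      have hzt : z i < t := by rw [ht]; linarith
      have hMt : Mi i < t := lt_of_le_of_lt (le_max_left _ _) hzt
      have hNt : Ni i < t := lt_of_le_of_lt (le_max_right _ _) hzt
      have h1 : a i ≤ t • b i := le_of_Mrel_lt (hb0 i) ⟨L, hL, habi i⟩ hMt
      have h2 : b i ≤ t • a i := le_of_Mrel_lt (ha0 i) ⟨K, hK, hbai i⟩ hNt
      have h3 : a i ≤ (t * t) • a i := by
        calc a i ≤ t • b i := h1
          _ ≤ t • (t • a i) := smul_le_smul_of_nonneg_left h2 ht0.le
          _ = (t * t) • a i := smul_smul t t (a i)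
      have h4 : (1 - t * t) • a i ≤ (1 - t * t) • (0 : A i) := by
        rw [smul_zero, sub_smul, one_smul, sub_nonpos]
        exact h3
      have htt : 0 < 1 - t * t := by nlinarith
      have h5 : a i ≤ 0 := le_of_smul_le_smul_left h4 htt
      exact hai (le_antisymm h5 (ha0 i))
  have hgoal : (⨆ i, dT (a i) (b i)) = ⨆ i, Real.log (z i) := rfl
  rw [hgoal, dT, hMab, hMba, hmax]
  exact log_ciSup_dich z hbddz hdich
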